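/- Rank-one factorization of the dual slack matrix of the upper-value SDP: assume P* is a symmetric n×n matrix with 𝓡(P*) = 0, and set K* = −R⁻¹BᵀP*, L* = γ⁻²B_wᵀP*, Q* = Q + (K*)ᵀRK*. Then the (n+p)×(n+p) block matrix with blocks [(A+BK*)ᵀP* + P*(A+BK*) + Q*, P*B_w; B_wᵀP*, −γ²I] equals −v vᵀ, where v is the (n+p)×p block matrix [γ(L*)ᵀ; −γI]. In particular, this block matrix is negative semidefinite. -/

import Mathlib

open Matrix

/-- Rank-one factorization of the dual slack matrix of the upper-value SDP. -/
theorem upper_value_dual_slack_factorization {n m p : ℕ}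
    (A : Matrix (Fin n) (Fin n) ℝ) (B : Matrix (Fin n) (Fin m) ℝ)
    (Bw : Matrix (Fin n) (Fin p) ℝ)
    (Q : Matrix (Fin n) (Fin n) ℝ) (hQ : Q.IsSymm)
    (R : Matrix (Fin m) (Fin m) ℝ) (hR : R.PosDef) (hRsymm : R.IsSymm)
    (γ : ℝ) (hγ : 0 < γ)
    (Ps : Matrix (Fin n) (Fin n) ℝ) (hPs : Ps.IsSymm)
    (hARE : Aᵀ * Ps + Ps * A + Q - Ps * B * R⁻¹ * Bᵀ * Ps
      + (γ ^ 2)⁻¹ • (Ps * Bw * Bwᵀ * Ps) = 0) :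
    -- with K* = −R⁻¹BᵀP*, L* = γ⁻²B_wᵀP*, Q* = Q + (K*)ᵀRK*
    (let Ks := -(R⁻¹ * Bᵀ * Ps)
     let Ls := (γ ^ 2)⁻¹ • (Bwᵀ * Ps)
     let Qs := Q + Ksᵀ * R * Ks
     let M : Matrix (Fin n ⊕ Fin p) (Fin n ⊕ Fin p) ℝ :=
       fromBlocks ((A + B * Ks)ᵀ * Ps + Ps * (A + B * Ks) + Qs) (Ps * Bw)
         (Bwᵀ * Ps) (-(γ ^ 2 • (1 : Matrix (Fin p) (Fin p) ℝ)))
     let v : Matrix (Fin n ⊕ Fin p) (Fin p) ℝ :=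
       fromRows (γ • Lsᵀ) (-(γ • (1 : Matrix (Fin p) (Fin p) ℝ)))
     M = -(v * vᵀ) ∧ (-M).PosSemidef) := by
  intro Ks Ls Qs M v
  have hγ2 : (γ : ℝ) ^ 2 ≠ 0 := pow_ne_zero 2 hγ.ne'
  have hRdet : IsUnit R.det := isUnit_iff_ne_zero.mpr hR.det_pos.ne'
  have hRinvT : R⁻¹ᵀ = R⁻¹ := by
    rw [Matrix.transpose_nonsing_inv, hRsymm.eq]
  have hKsT : Ksᵀ = -(Ps * B * R⁻¹) := by
    show (-(R⁻¹ * Bᵀ * Ps))ᵀ = _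
    simp [Matrix.transpose_mul, hRinvT, hPs.eq, Matrix.mul_assoc]
  have hKRK : Ksᵀ * R * Ks = Ps * B * R⁻¹ * Bᵀ * Ps := by
    rw [hKsT]
    show -(Ps * B * R⁻¹) * R * -(R⁻¹ * Bᵀ * Ps) = _
    simp only [Matrix.neg_mul, Matrix.mul_neg, neg_neg, Matrix.mul_assoc]
    rw [Matrix.mul_nonsing_inv_cancel_left R _ hRdet]
  have hTL : (A + B * Ks)ᵀ * Ps + Ps * (A + B * Ks) + Qs
      = -((γ ^ 2)⁻¹ • (Ps * Bw * Bwᵀ * Ps)) := by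
    have hexp : (A + B * Ks)ᵀ * Ps + Ps * (A + B * Ks) + Qs
        = Aᵀ * Ps + Ps * A + Q - Ps * B * R⁻¹ * Bᵀ * Ps := by
      show (A + B * Ks)ᵀ * Ps + Ps * (A + B * Ks) + (Q + Ksᵀ * R * Ks) = _
      rw [hKRK, Matrix.transpose_add, Matrix.transpose_mul, hKsT]
      show (Aᵀ + -(Ps * B * R⁻¹) * Bᵀ) * Ps + Ps * (A + B * -(R⁻¹ * Bᵀ * Ps))
          + (Q + Ps * B * R⁻¹ * Bᵀ * Ps) = _
      simp only [Matrix.add_mul, Matrix.mul_add, Matrix.neg_mul, Matrix.mul_neg,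
        Matrix.mul_assoc]
      abel
    rw [hexp, eq_neg_iff_add_eq_zero, ← hARE]
  have hLsT : γ • Lsᵀ = γ⁻¹ • (Ps * Bw) := by
    show γ • ((γ ^ 2)⁻¹ • (Bwᵀ * Ps))ᵀ = _
    rw [Matrix.transpose_smul, Matrix.transpose_mul, hPs.eq, smul_smul]
    congr 1
    rw [sq, mul_inv, ← mul_assoc, mul_inv_cancel₀ hγ.ne', one_mul]
  have hLs : γ • Ls = γ⁻¹ • (Bwᵀ * Ps) := by
    show γ • ((γ ^ 2)⁻¹ • (Bwᵀ * Ps)) = _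
    rw [smul_smul]
    congr 1
    rw [sq, mul_inv, ← mul_assoc, mul_inv_cancel₀ hγ.ne', one_mul]
  have hγγ : γ⁻¹ * γ⁻¹ = (γ ^ 2)⁻¹ := by
    rw [sq, mul_inv]
  have hM : M = -(v * vᵀ) := by
    have hvT : vᵀ = fromCols (γ • Ls) (-(γ • (1 : Matrix (Fin p) (Fin p) ℝ))) := by
      show (fromRows (γ • Lsᵀ) (-(γ • (1 : Matrix (Fin p) (Fin p) ℝ))))ᵀ = _
      rw [Matrix.transpose_fromRows, Matrix.transpose_smul, Matrix.transpose_transpose,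
        Matrix.transpose_neg, Matrix.transpose_smul, Matrix.transpose_one]
    have hvv : v * vᵀ = fromBlocks ((γ • Lsᵀ) * (γ • Ls))
        ((γ • Lsᵀ) * (-(γ • (1 : Matrix (Fin p) (Fin p) ℝ))))
        ((-(γ • (1 : Matrix (Fin p) (Fin p) ℝ))) * (γ • Ls))
        ((-(γ • (1 : Matrix (Fin p) (Fin p) ℝ))) * (-(γ • (1 : Matrix (Fin p) (Fin p) ℝ)))) := by
      rw [hvT]
      exact Matrix.fromRows_mul_fromCols _ _ _ _
    show fromBlocks ((A + B * Ks)ᵀ * Ps + Ps * (A + B * Ks) + Qs) (Ps * Bw)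
         (Bwᵀ * Ps) (-(γ ^ 2 • (1 : Matrix (Fin p) (Fin p) ℝ))) = -(v * vᵀ)
    rw [hvv, Matrix.fromBlocks_neg, hTL, hLsT, hLs]
    simp only [Matrix.smul_mul, Matrix.mul_smul, Matrix.mul_neg, Matrix.neg_mul, neg_neg,
      smul_neg, Matrix.mul_one, Matrix.one_mul, smul_smul, hγγ,
      inv_mul_cancel₀ hγ.ne', mul_inv_cancel₀ hγ.ne', one_smul, Matrix.mul_assoc]
    rw [show γ * γ = γ ^ 2 by ring]
  refine ⟨hM, ?_⟩
  rw [hM, neg_neg]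
  have : v * vᵀ = v * vᴴ := by
    rw [Matrix.conjTranspose_eq_transpose_of_trivial]
  rw [this]
  exact Matrix.posSemidef_self_mul_conjTranspose v
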